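/- Let F be a proper subfield of a field K of characteristic 0. Then for every nonzero polynomial p ∈ K[x] and every positive integer r, D_F(p^[r]) ≥ D_F(p). -/

import Mathlib

open Polynomial

/-- The `F`-deficit of a polynomial `p`: `natDegree p` minus the largest index
of a coefficient not lying in `F`. When all coefficients lie in `F`, the set
below is empty, `sSup ∅ = 0`, and the deficit equals `natDegree p`. -/
noncomputable def deficit {K : Type*} [Field K] (F : Subfield K) (p : K[X]) : ℕ :=
  p.natDegree - sSup {k : ℕ | p.coeff k ∉ F}

/-- The `r`-th iterate of a polynomial under composition: `polyIter p 1 = p`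
and `polyIter p (r+1) = p.comp (polyIter p r)`. -/
noncomputable def polyIter {K : Type*} [Field K] (p : K[X]) : ℕ → K[X]
  | 0 => X
  | r + 1 => p.comp (polyIter p r)

section Aux

variable {K : Type*} [Field K] (F : Subfield K)

lemma bad_bddAbove (p : K[X]) : BddAbove {k : ℕ | p.coeff k ∉ F} := by
  refine ⟨p.natDegree, fun k hk => ?_⟩
  by_contra h
  push_neg at h
  exact hk (by rw [p.coeff_eq_zero_of_natDegree_lt h]; exact F.zero_mem)

lemma sSup_bad_le (p : K[X]) : sSup {k : ℕ | p.coeff k ∉ F} ≤ p.natDegree := by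
  refine csSup_le' (fun k hk => ?_)
  by_contra h
  push_neg at h
  exact hk (by rw [p.coeff_eq_zero_of_natDegree_lt h]; exact F.zero_mem)

lemma coeff_mem_of_sSup_lt (p : K[X]) {k : ℕ}
    (h : sSup {k : ℕ | p.coeff k ∉ F} < k) : p.coeff k ∈ F := by
  by_contra h'
  exact absurd (le_csSup (bad_bddAbove F p) h') (not_le.2 h)

lemma deficit_le_natDegree (p : K[X]) : deficit F p ≤ p.natDegree :=
  Nat.sub_le _ _

lemma pow_coeff_mem (q : K[X]) :
    ∀ i k : ℕ, i * q.natDegree + sSup {k : ℕ | q.coeff k ∉ F} < k + q.natDegree →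
      (q ^ i).coeff k ∈ F := by
  set d := q.natDegree with hd
  set m := sSup {k : ℕ | q.coeff k ∉ F} with hm
  intro i
  induction i with
  | zero =>
    intro k _
    simp only [pow_zero, coeff_one]
    split_ifs <;> [exact F.one_mem; exact F.zero_mem]
  | succ i ih =>
    intro k hk
    have hk' : i * d + m < k := by
      have : (i + 1) * d = i * d + d := by ring
      omega
    rw [pow_succ, coeff_mul]
    refine Subfield.sum_mem F (fun x hx => ?_)
    rw [Finset.HasAntidiagonal.mem_antidiagonal] at hx
    rcases le_or_gt x.2 m with h2 | h2
    · -- low coefficient of q: the q^i factor vanishes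
      have hdeg : (q ^ i).natDegree < x.1 := by
        have h1 : (q ^ i).natDegree ≤ i * d := hd ▸ natDegree_pow_le
        omega
      rw [coeff_eq_zero_of_natDegree_lt hdeg, zero_mul]
      exact F.zero_mem
    · rcases le_or_gt x.2 d with h3 | h3
      · exact F.mul_mem (ih x.1 (by omega)) (coeff_mem_of_sSup_lt F q h2)
      · rw [coeff_eq_zero_of_natDegree_lt h3, mul_zero]
        exact F.zero_mem

lemma deficit_comp (p q : K[X]) :
    min (deficit F p) (deficit F q) ≤ deficit F (p.comp q) := by
  set δ := min (deficit F p) (deficit F q) with hδdef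
  rcases Nat.eq_zero_or_pos δ with hδ | hδ
  · simp [hδ]
  set n := p.natDegree with hn
  set d := q.natDegree with hd
  set mp := sSup {k : ℕ | p.coeff k ∉ F} with hmp
  set mq := sSup {k : ℕ | q.coeff k ∉ F} with hmq
  have hmpn : mp ≤ n := sSup_bad_le F p
  have hmqd : mq ≤ d := sSup_bad_le F q
  have hδp : δ ≤ n - mp := min_le_left _ _
  have hδq : δ ≤ d - mq := min_le_right _ _
  clear_value δ n d mp mq
  have hn1 : 1 ≤ n := by omega
  have hd1 : 1 ≤ d := by omega
  -- key coefficient claim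
  have key : ∀ k : ℕ, n * d < k + δ → (p.comp q).coeff k ∈ F := by
    intro k hk
    rw [comp_eq_sum_left, coeff_sum, Polynomial.sum_def]
    refine Subfield.sum_mem F (fun i hi => ?_)
    rw [coeff_C_mul]
    have hin : i ≤ n := hn ▸ le_natDegree_of_mem_supp i hi
    rcases le_or_gt i mp with him | him
    · -- q^i has too small degree
      have h1 : (q ^ i).natDegree ≤ i * d := hd ▸ natDegree_pow_le
      have h2 : i * d ≤ mp * d := Nat.mul_le_mul_right d him
      have h3 : mp * d + (n - mp) * d = n * d := by
        rw [← Nat.add_mul]; congr 1; omega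
      have h4 : δ ≤ (n - mp) * d := le_trans hδp (Nat.le_mul_of_pos_right _ hd1)
      have hdeg : (q ^ i).natDegree < k := by omega
      rw [coeff_eq_zero_of_natDegree_lt hdeg, mul_zero]
      exact F.zero_mem
    · refine F.mul_mem (coeff_mem_of_sSup_lt F p (hmp ▸ him)) ?_
      refine pow_coeff_mem F q i k ?_
      rw [← hd, ← hmq]
      have h2 : i * d ≤ n * d := Nat.mul_le_mul_right d hin
      omega
  -- conclude
  have hN : (p.comp q).natDegree = n * d := by rw [hn, hd]; exact natDegree_comp
  have hδnd : δ ≤ n * d :=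
    le_trans hδq (le_trans (Nat.sub_le _ _) (Nat.le_mul_of_pos_left _ hn1))
  have hsup : sSup {k : ℕ | (p.comp q).coeff k ∉ F} ≤ n * d - δ := by
    refine csSup_le' (fun k hk => ?_)
    by_contra h
    push_neg at h
    exact hk (key k (by omega))
  rw [deficit, hN]
  omega

end Aux

theorem stmt8 {K : Type*} [Field K] [CharZero K] (F : Subfield K) (hF : F ≠ ⊤) :
    ∀ p : K[X], p ≠ 0 → ∀ r : ℕ, 1 ≤ r →
      deficit F p ≤ deficit F (polyIter p r) := by
  intro p hp r hr
  induction r with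
  | zero => omega
  | succ s ih =>
    rcases Nat.eq_zero_or_pos s with hs | hs
    · subst hs
      simp [polyIter]
    · have h1 : deficit F p ≤ deficit F (polyIter p s) := ih hs
      have h2 := deficit_comp F p (polyIter p s)
      rw [min_eq_left h1] at h2
      exact le_trans h2 (le_of_eq rfl)
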